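/- arXiv:2602.01506 — 3 statements merged into one kernel-verified Lean document; each statement's English description precedes it below -/
import Mathlib

section
/- Let v, s : ℝ × ℝ → ℝ be differentiable functions of (x, t), let k_s, k_v, τ, L be real constants, and let x : ℝ → ℝ be a differentiable trajectory with x′(t) = v(x(t), t) for all t. Suppose that along the trajectory the ACC control law holds: d/dt [v(x(t), t)] = k_s ( s(x(t), t) − τ v(x(t), t) − L ) + k_v · d/dt [ s(x(t), t) ], and that the spacing conservation identity ∂ₜs + v ∂ₓs = s ∂ₓv holds at (x(t), t). Then the momentum equation ∂ₜv + (v − k_v s) ∂ₓv + (τ v + L − s) k_s = 0 holds at (x(t), t). -/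
lemma chain_aux (f : ℝ × ℝ → ℝ) (x : ℝ → ℝ) (c t : ℝ)
    (hf : Differentiable ℝ f) (hx : HasDerivAt x c t) :
    deriv (fun u => f (x u, u)) t
      = c * fderiv ℝ f (x t, t) (1, 0) + fderiv ℝ f (x t, t) (0, 1) := by
  have hγ : HasDerivAt (fun u => (x u, u)) (c, 1) t := hx.prodMk (hasDerivAt_id t)
  have h : HasDerivAt (f ∘ fun u => (x u, u)) (fderiv ℝ f (x t, t) (c, 1)) t :=
    HasFDerivAt.comp_hasDerivAt (f := fun u => (x u, u)) t (hf _).hasFDerivAt hγ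
  have h : HasDerivAt (fun u => f (x u, u)) (fderiv ℝ f (x t, t) (c, 1)) t := h
  rw [h.deriv]
  have : (c, (1:ℝ)) = c • ((1:ℝ), (0:ℝ)) + ((0:ℝ), (1:ℝ)) := by simp
  rw [this, map_add, map_smul]
  simp [smul_eq_mul]

/-- Derivation of the ACC momentum equation (Proposition 1).
Let `v` and `s` be differentiable speed and spacing fields, and let `x` be a
vehicle trajectory with `x'(t) = v(x(t), t)`.  If the linear ACC feedback law
`d/dt v(x(t),t) = k_s (s - τ v - L) + k_v d/dt s(x(t),t)` holds along the
trajectory, and the spacing conservation identity `∂ₜs + v ∂ₓs = s ∂ₓv` holds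
at `(x(t), t)`, then the momentum equation
`∂ₜv + (v - k_v s) ∂ₓv + (τ v + L - s) k_s = 0` holds at `(x(t), t)`.
Here a point of `ℝ × ℝ` is `(x, t)`, `∂ₓ f p = fderiv ℝ f p (1, 0)` and
`∂ₜ f p = fderiv ℝ f p (0, 1)`. -/
theorem acc_momentum_equation
    (v s : ℝ × ℝ → ℝ) (k_s k_v τ L : ℝ) (x : ℝ → ℝ)
    (hv : Differentiable ℝ v) (hs : Differentiable ℝ s)
    (hx : ∀ t, HasDerivAt x (v (x t, t)) t)
    (hacc : ∀ t, deriv (fun u => v (x u, u)) t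
        = k_s * (s (x t, t) - τ * v (x t, t) - L)
          + k_v * deriv (fun u => s (x u, u)) t)
    (hcons : ∀ t, fderiv ℝ s (x t, t) (0, 1)
        + v (x t, t) * fderiv ℝ s (x t, t) (1, 0)
      = s (x t, t) * fderiv ℝ v (x t, t) (1, 0)) :
    ∀ t, fderiv ℝ v (x t, t) (0, 1)
        + (v (x t, t) - k_v * s (x t, t)) * fderiv ℝ v (x t, t) (1, 0)
        + (τ * v (x t, t) + L - s (x t, t)) * k_s = 0 := by
  intro t
  have hdv := chain_aux v x (v (x t, t)) t hv (hx t)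
  have hds := chain_aux s x (v (x t, t)) t hs (hx t)
  have h := hacc t
  rw [hdv, hds] at h
  have hc := hcons t
  linear_combination h + k_v * hc
end

section
/- Let k_v : ℝ → ℝ be a differentiable function of density ρ alone, and on {(ρ, v) : ρ > 0} define λ₂(ρ, v) = v − k_v(ρ)/ρ and r₂(ρ, v) = (1, −k_v(ρ)/ρ²). Then for every ρ > 0 and v ∈ ℝ, ∇λ₂(ρ, v) · r₂(ρ, v) = −k_v′(ρ)/ρ. Consequently, the second characteristic field is genuinely nonlinear at every state (ρ, v) with k_v′(ρ) ≠ 0. -/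
/-- With a density-dependent gain `k_v(ρ)`, the second characteristic field
`λ₂(ρ,v) = v - k_v(ρ)/ρ`, `r₂(ρ,v) = (1, -k_v(ρ)/ρ²)` of the ACC-embedded
traffic flow model satisfies `∇λ₂ · r₂ = -k_v'(ρ)/ρ` for every `ρ > 0` and `v`;
consequently the field is genuinely nonlinear (`∇λ₂ · r₂ ≠ 0`) at every state
where `k_v'(ρ) ≠ 0`. -/
theorem acc_density_dependent_gain_genuinely_nonlinear
    (k_v : ℝ → ℝ) (hk : Differentiable ℝ k_v) :
    ∀ ρ v : ℝ, 0 < ρ →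
      fderiv ℝ (fun p : ℝ × ℝ => p.2 - k_v p.1 / p.1) (ρ, v)
          (1, -k_v ρ / ρ ^ 2)
        = -(deriv k_v ρ) / ρ ∧
      (deriv k_v ρ ≠ 0 →
        fderiv ℝ (fun p : ℝ × ℝ => p.2 - k_v p.1 / p.1) (ρ, v)
          (1, -k_v ρ / ρ ^ 2) ≠ 0) := by
  intro ρ v hρ
  have hρ0 : ρ ≠ 0 := ne_of_gt hρ
  have hg : HasDerivAt (fun x => k_v x / x)
      ((deriv k_v ρ * ρ - k_v ρ * 1) / ρ ^ 2) ρ :=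
    ((hk ρ).hasDerivAt).div (hasDerivAt_id ρ) hρ0
  have hgf : HasFDerivAt (fun p : ℝ × ℝ => k_v p.1 / p.1)
      ((ContinuousLinearMap.smulRight (1 : ℝ →L[ℝ] ℝ)
        ((deriv k_v ρ * ρ - k_v ρ * 1) / ρ ^ 2)).comp
        (ContinuousLinearMap.fst ℝ ℝ ℝ)) (ρ, v) :=
    by have := (hg.hasFDerivAt).comp (ρ, v) (hasFDerivAt_fst (𝕜 := ℝ) (p := (ρ, v))); exact this
  have hf : HasFDerivAt (fun p : ℝ × ℝ => p.2 - k_v p.1 / p.1)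
      ((ContinuousLinearMap.snd ℝ ℝ ℝ) -
        ((ContinuousLinearMap.smulRight (1 : ℝ →L[ℝ] ℝ)
          ((deriv k_v ρ * ρ - k_v ρ * 1) / ρ ^ 2)).comp
          (ContinuousLinearMap.fst ℝ ℝ ℝ))) (ρ, v) :=
    (hasFDerivAt_snd.sub hgf)
  have key : fderiv ℝ (fun p : ℝ × ℝ => p.2 - k_v p.1 / p.1) (ρ, v)
      (1, -k_v ρ / ρ ^ 2) = -(deriv k_v ρ) / ρ := by
    rw [hf.fderiv]
    simp
    field_simp
    ring
  refine ⟨key, fun hne => ?_⟩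
  rw [key]
  exact div_ne_zero (neg_ne_zero.mpr hne) hρ0
end

section
/- Let τ > 0, L > 0, and let v_l, v_r be real numbers with v_l ≠ v_r, τ v_l + L > 0 and τ v_r + L > 0. Define the densities ρ_l = 1/(τ v_l + L) and ρ_r = 1/(τ v_r + L). Then ρ_l ≠ ρ_r, and the Rankine–Hugoniot shock speed for the mass equation satisfies (ρ_r v_r − ρ_l v_l)/(ρ_r − ρ_l) = −L/τ. -/
/-- Rankine–Hugoniot shock speed across the cruise-to-control transition.  For
steady states on the constant time-headway manifold, with densities
`ρ_l = 1/(τ v_l + L)` and `ρ_r = 1/(τ v_r + L)` and `v_l ≠ v_r`, the densities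
are distinct and the shock speed `(ρ_r v_r - ρ_l v_l)/(ρ_r - ρ_l)` equals
`-L/τ`. -/
theorem rankine_hugoniot_shock_speed
    (τ L v_l v_r : ℝ) (hτ : 0 < τ) (hL : 0 < L) (hne : v_l ≠ v_r)
    (hl : 0 < τ * v_l + L) (hr : 0 < τ * v_r + L) :
    (1 : ℝ) / (τ * v_l + L) ≠ 1 / (τ * v_r + L) ∧
    ((1 / (τ * v_r + L)) * v_r - (1 / (τ * v_l + L)) * v_l)
        / ((1 / (τ * v_r + L)) - (1 / (τ * v_l + L))) = -L / τ := by
  have hl' := hl.ne'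
  have hr' := hr.ne'
  have hτ' := hτ.ne'
  have hd : (τ * v_l + L) ≠ (τ * v_r + L) := by
    intro h
    exact hne (by
      have : τ * v_l = τ * v_r := by linarith
      exact mul_left_cancel₀ hτ' this)
  constructor
  · intro h
    exact hd (by
      rw [div_eq_div_iff hl' hr', one_mul, one_mul] at h
      exact h.symm)
  · rw [div_eq_div_iff]
    · field_simp
      ring
    · rw [sub_ne_zero]
      intro h
      exact hd (by
        rw [div_eq_div_iff hr' hl', one_mul, one_mul] at h
        exact h)
    · exact hτ'
end
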